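/- Let G be a compact group. Every nonzero closed two-sided ideal I of the convolution algebra L²(G) contains a nonzero central element. In particular, for f ∈ I with f ≠ 0, the element f̃ ∗ f is nonzero since (f̃ ∗ f)(e) = ‖f‖₂², and the central projection P_Z f := λx. ∫ f(z x z⁻¹) dz of a suitable element of I is nonzero and lies in I. -/

import Mathlib

set_option maxHeartbeats 1000000


open MeasureTheory

section Aux

variable {G : Type*} [Group G] [TopologicalSpace G] [IsTopologicalGroup G] [CompactSpace G]
  [MeasurableSpace G] [BorelSpace G]

theorem aux_mulRightInvariant (μ : Measure G) [μ.IsHaarMeasure] [IsProbabilityMeasure μ] :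
    μ.IsMulRightInvariant := by
  constructor
  intro g
  have hconj : MeasurePreserving (⇑((MulAut.conj g⁻¹).toMonoidHom)) μ μ := by
    apply MonoidHom.measurePreserving (f := (MulAut.conj g⁻¹).toMonoidHom)
    · show Continuous fun x => g⁻¹ * x * g⁻¹⁻¹
      fun_prop
    · exact (MulAut.conj g⁻¹).surjective
    · rfl
  have h1 : (fun x => x * g) = (⇑((MulAut.conj g⁻¹).toMonoidHom)) ∘ (fun x => g * x) := by
    funext x
    show x * g = g⁻¹ * (g * x) * g⁻¹⁻¹
    group
  rw [h1, ← Measure.map_map hconj.measurable (measurable_const_mul g),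
    MeasureTheory.map_mul_left_eq_self μ g, hconj.map_eq]

theorem aux_invInvariant (μ : Measure G) [μ.IsHaarMeasure] [IsProbabilityMeasure μ] :
    μ.IsInvInvariant := by
  haveI := aux_mulRightInvariant μ
  constructor
  haveI : IsProbabilityMeasure μ.inv :=
    Measure.isProbabilityMeasure_map measurable_inv.aemeasurable
  haveI : μ.inv.IsOpenPosMeasure := by
    constructor
    intro U hU hUne
    rw [Measure.inv_apply]
    exact (hU.inv.measure_ne_zero μ (by simpa using hUne))
  haveI : μ.inv.IsHaarMeasure := { }
  exact Measure.isHaarMeasure_eq_of_isProbabilityMeasure μ.inv μ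

/-- A continuous function on a compact space is in every `Lp` of a finite measure. -/
theorem aux_memLp (μ : Measure G) [IsProbabilityMeasure μ] {φ : G → ℂ} (hφ : Continuous φ) :
    MemLp φ 2 μ := by
  refine MemLp.of_bound hφ.aestronglyMeasurable ‖(⟨φ, hφ⟩ : C(G, ℂ))‖ ?_
  exact Filter.Eventually.of_forall fun x => ContinuousMap.norm_coe_le_norm (⟨φ, hφ⟩ : C(G, ℂ)) x

end Aux

open Complex
open scoped ENNReal

theorem nonzero_closed_ideal_contains_central_element {G : Type*} [Group G]
    [TopologicalSpace G] [IsTopologicalGroup G] [CompactSpace G] [MeasurableSpace G]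
    [BorelSpace G] (μ : Measure G) [μ.IsHaarMeasure] [IsProbabilityMeasure μ]
    (S : Submodule ℂ (Lp ℂ 2 μ)) (hS : IsClosed (S : Set (Lp ℂ 2 μ)))
    -- left ideal
    (hleft : ∀ (g f : Lp ℂ 2 μ), f ∈ S →
      ∀ hc : MemLp (fun x => ∫ y, g y * f (y⁻¹ * x) ∂μ) 2 μ, hc.toLp _ ∈ S)
    -- right ideal
    (hright : ∀ (g f : Lp ℂ 2 μ), f ∈ S →
      ∀ hc : MemLp (fun x => ∫ y, f y * g (y⁻¹ * x) ∂μ) 2 μ, hc.toLp _ ∈ S)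
    -- the ideal is nonzero
    (hne : ∃ f ∈ S, f ≠ 0) :
    -- (f̃ ∗ f)(e) = ‖f‖₂²
    (∀ f : Lp ℂ 2 μ, (∫ y, (starRingEnd ℂ) (f y⁻¹) * f y⁻¹ ∂μ) =
      ((∫ y, ‖f y‖ ^ 2 ∂μ : ℝ) : ℂ)) ∧
    -- the ideal contains a nonzero central element
    (∃ c ∈ S, c ≠ 0 ∧ ∀ g : Lp ℂ 2 μ, ∀ᵐ x ∂μ,
      (∫ y, g y * c (y⁻¹ * x) ∂μ) = ∫ y, c y * g (y⁻¹ * x) ∂μ) := by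
  haveI hRI := aux_mulRightInvariant μ
  haveI hII := aux_invInvariant μ
  constructor
  · -- Part 1
    intro f
    have h1 : ∫ y, (starRingEnd ℂ) (f y⁻¹) * f y⁻¹ ∂μ
        = ∫ y, (starRingEnd ℂ) (f y) * f y ∂μ :=
      MeasureTheory.integral_inv_eq_self (fun y => (starRingEnd ℂ) (f y) * f y) μ
    rw [h1]
    have h2 : ∀ y : G, (starRingEnd ℂ) (f y) * f y = ((‖f y‖ ^ 2 : ℝ) : ℂ) := by
      intro y
      rw [Complex.conj_mul']
      norm_cast
    simp_rw [h2]
    exact integral_ofReal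
  · have aux_memLp' : ∀ {φ : G → ℂ}, Continuous φ → MemLp φ 2 μ :=
      fun hφ => aux_memLp μ hφ
    obtain ⟨f, hfS, hf0⟩ := hne
    have two_ne_top : (2 : ℝ≥0∞) ≠ ⊤ := by norm_num
    -- translation machinery
    have mpinv : MeasurePreserving (fun y : G => y⁻¹) μ μ := Measure.measurePreserving_inv μ
    have mpr : ∀ x : G, MeasurePreserving (fun y : G => y⁻¹ * x) μ μ := fun x =>
      (measurePreserving_mul_right μ x).comp mpinv
    let m : C(G × G, G) := ⟨fun p => p.2⁻¹ * p.1, by fun_prop⟩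
    let CM : C(G, C(G, G)) := ContinuousMap.curry m
    have hCM : ∀ x : G, MeasurePreserving (⇑(CM x)) μ μ := fun x => mpr x
    let tau : G → Lp ℂ 2 μ → Lp ℂ 2 μ := fun x v => Lp.compMeasurePreserving (CM x) (hCM x) v
    have htau_coe : ∀ (x : G) (v : Lp ℂ 2 μ), ⇑(tau x v) =ᵐ[μ] fun y => v (y⁻¹ * x) :=
      fun x v => Lp.coeFn_compMeasurePreserving v (hCM x)
    have htau_cont : ∀ v : Lp ℂ 2 μ, Continuous fun x => tau x v := fun v =>
      Continuous.compMeasurePreservingLp continuous_const CM.continuous hCM two_ne_top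
    -- a.e. pullback
    have haeq : ∀ (T : G → G), MeasurePreserving T μ μ → ∀ {φ ψ : G → ℂ}, φ =ᵐ[μ] ψ →
        (fun y => φ (T y)) =ᵐ[μ] (fun y => ψ (T y)) := fun T hT φ ψ h =>
      hT.quasiMeasurePreserving.ae_eq_comp h
    -- the conjugate element
    have hmem_star : ∀ u : Lp ℂ 2 μ, MemLp (fun y => (starRingEnd ℂ) (u y)) 2 μ := fun u => by
      refine MemLp.of_le (Lp.memLp u)
        (Complex.continuous_conj.comp_aestronglyMeasurable (Lp.aestronglyMeasurable u)) ?_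
      exact Filter.Eventually.of_forall fun y => by simp
    -- inner product formula
    have hinner : ∀ (u v : Lp ℂ 2 μ),
        (inner ℂ ((hmem_star u).toLp _) v : ℂ) = ∫ y, u y * v y ∂μ := by
      intro u v
      rw [L2.inner_def]
      refine integral_congr_ae ?_
      filter_upwards [MemLp.coeFn_toLp (hmem_star u)] with y hy
      rw [RCLike.inner_apply, hy]
      simp
      exact mul_comm _ _
    -- convolution formula as inner product
    have hconv : ∀ (u v : Lp ℂ 2 μ) (x : G),
        ∫ y, u y * v (y⁻¹ * x) ∂μ = (inner ℂ ((hmem_star u).toLp _) (tau x v) : ℂ) := by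
      intro u v x
      rw [hinner u (tau x v)]
      refine integral_congr_ae ?_
      filter_upwards [htau_coe x v] with y hy
      rw [hy]
    have hcont_conv : ∀ u v : Lp ℂ 2 μ, Continuous fun x => ∫ y, u y * v (y⁻¹ * x) ∂μ := by
      intro u v
      have : (fun x => ∫ y, u y * v (y⁻¹ * x) ∂μ)
          = fun x => (inner ℂ ((hmem_star u).toLp _) (tau x v) : ℂ) := funext fun x => hconv u v x
      rw [this]
      exact Continuous.inner continuous_const (htau_cont v)
    have hmem_conv : ∀ u v : Lp ℂ 2 μ, MemLp (fun x => ∫ y, u y * v (y⁻¹ * x) ∂μ) 2 μ :=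
      fun u v => aux_memLp' (hcont_conv u v)
    -- the element `f̃`
    let Finv : Lp ℂ 2 μ := Lp.compMeasurePreserving _ mpinv f
    let Ft : Lp ℂ 2 μ := (hmem_star Finv).toLp _
    have hFt : ⇑Ft =ᵐ[μ] fun y => (starRingEnd ℂ) (f y⁻¹) := by
      refine (MemLp.coeFn_toLp (hmem_star Finv)).trans ?_
      have h1 : ⇑Finv =ᵐ[μ] fun y => f y⁻¹ := Lp.coeFn_compMeasurePreserving f mpinv
      filter_upwards [h1] with y hy
      rw [hy]
    -- k = f ∗ f̃ ; K its Lp class, in S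
    set k : G → ℂ := fun x => ∫ y, f y * Ft (y⁻¹ * x) ∂μ with hk_def
    have hk_cont : Continuous k := hcont_conv f Ft
    have hk_mem : MemLp k 2 μ := hmem_conv f Ft
    set K : Lp ℂ 2 μ := hk_mem.toLp _ with hK_def
    have hKS : K ∈ S := hright Ft f hfS hk_mem
    have hKk : ⇑K =ᵐ[μ] k := MemLp.coeFn_toLp hk_mem
    -- k 1 ≠ 0
    have hk1 : k 1 = ((‖f‖ : ℝ) : ℂ) ^ 2 := by
      have h1 : k 1 = ∫ y, f y * (starRingEnd ℂ) (f y) ∂μ := by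
        refine integral_congr_ae ?_
        filter_upwards [haeq _ (mpr 1) hFt] with y hy
        rw [hy]
        simp
      have h2 : ∫ y, f y * (starRingEnd ℂ) (f y) ∂μ = (inner ℂ f f : ℂ) := by
        rw [L2.inner_def]
        refine integral_congr_ae (Filter.Eventually.of_forall fun y => ?_)
        simp only [RCLike.inner_apply]
      rw [h1, h2, inner_self_eq_norm_sq_to_K]
      norm_cast
    have hk1_ne : k 1 ≠ 0 := by
      rw [hk1]
      have : ‖f‖ ≠ 0 := fun h => hf0 (norm_eq_zero.mp h)
      exact pow_ne_zero 2 (Complex.ofReal_ne_zero.mpr this)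
    -- k y⁻¹ = conj (k y)
    have hkinv : ∀ y : G, k y⁻¹ = (starRingEnd ℂ) (k y) := by
      intro y
      have h1 : k y⁻¹ = ∫ t, f t * (starRingEnd ℂ) (f (y * t)) ∂μ := by
        refine integral_congr_ae ?_
        filter_upwards [haeq _ (mpr y⁻¹) hFt] with t ht
        rw [ht]
        congr 2
        group
      have h2 : (starRingEnd ℂ) (k y) = ∫ t, (starRingEnd ℂ) (f t) * f (y⁻¹ * t) ∂μ := by
        have e0 : (starRingEnd ℂ) (k y)
            = ∫ t, (starRingEnd ℂ) (f t * Ft (t⁻¹ * y)) ∂μ := integral_conj.symm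
        rw [e0]
        refine integral_congr_ae ?_
        filter_upwards [haeq _ (mpr y) hFt] with t ht
        simp only [map_mul]
        rw [ht]
        simp [mul_inv_rev]
      have h3 : ∫ t, (starRingEnd ℂ) (f t) * f (y⁻¹ * t) ∂μ
          = ∫ t, (starRingEnd ℂ) (f (y * t)) * f t ∂μ := by
        rw [← MeasureTheory.integral_mul_left_eq_self
          (fun t => (starRingEnd ℂ) (f t) * f (y⁻¹ * t)) y]
        refine integral_congr_ae (Filter.Eventually.of_forall fun t => ?_)
        simp [inv_mul_cancel_left]
      rw [h1, h2, h3]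
      refine integral_congr_ae (Filter.Eventually.of_forall fun t => ?_)
      exact mul_comm _ _
    -- h₀ = k ∗ k
    set h₀ : G → ℂ := fun x => ∫ y, k y * k (y⁻¹ * x) ∂μ with hh₀_def
    have hh₀_eq : h₀ = fun x => ∫ y, K y * K (y⁻¹ * x) ∂μ := by
      funext x
      refine integral_congr_ae ?_
      filter_upwards [hKk, haeq _ (mpr x) hKk] with y hy hy2
      rw [hy, hy2]
    have hh₀_cont : Continuous h₀ := by rw [hh₀_eq]; exact hcont_conv K K
    -- membership of all conjugates of h₀
    have hCz : ∀ z : G, ∃ C ∈ S, ⇑C =ᵐ[μ] fun x => h₀ (z * x * z⁻¹) := by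
      intro z
      -- right translate of f̃
      let Gz : Lp ℂ 2 μ := Lp.compMeasurePreserving _ (measurePreserving_mul_right μ z⁻¹) Ft
      have hGz : ⇑Gz =ᵐ[μ] fun t => Ft (t * z⁻¹) :=
        Lp.coeFn_compMeasurePreserving Ft (measurePreserving_mul_right μ z⁻¹)
      have claim1 : (fun x => ∫ y, f y * Gz (y⁻¹ * x) ∂μ) = fun x => k (x * z⁻¹) := by
        funext x
        rw [hk_def]
        refine integral_congr_ae ?_
        filter_upwards [haeq _ (mpr x) hGz] with y hy
        rw [hy, mul_assoc]
      have hmemz : MemLp (fun x => ∫ y, f y * Gz (y⁻¹ * x) ∂μ) 2 μ := by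
        rw [claim1]
        exact aux_memLp' (hk_cont.comp (continuous_mul_right z⁻¹))
      have hKzS : hmemz.toLp _ ∈ S := hright Gz f hfS hmemz
      set Kz : Lp ℂ 2 μ := hmemz.toLp _ with hKz_def
      have hKzk : ⇑Kz =ᵐ[μ] fun x => k (x * z⁻¹) := by
        refine (MemLp.coeFn_toLp hmemz).trans ?_
        rw [claim1]
      -- left translate of k
      have hmemH : MemLp (fun t => k (z * t)) 2 μ :=
        aux_memLp' (hk_cont.comp (continuous_mul_left z))
      set Hz : Lp ℂ 2 μ := hmemH.toLp _ with hHz_def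
      have hHz : ⇑Hz =ᵐ[μ] fun t => k (z * t) := MemLp.coeFn_toLp hmemH
      have claim2 : (fun x => ∫ y, Hz y * Kz (y⁻¹ * x) ∂μ)
          = fun x => h₀ (z * x * z⁻¹) := by
        funext x
        have e1 : ∫ y, Hz y * Kz (y⁻¹ * x) ∂μ = ∫ y, k (z * y) * k (y⁻¹ * x * z⁻¹) ∂μ := by
          refine integral_congr_ae ?_
          filter_upwards [hHz, haeq _ (mpr x) hKzk] with y hy hy2
          rw [hy, hy2]
        have e2 : ∫ y, k (z * y) * k (y⁻¹ * x * z⁻¹) ∂μ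
            = ∫ y, k y * k (y⁻¹ * (z * x * z⁻¹)) ∂μ := by
          rw [← MeasureTheory.integral_mul_left_eq_self
            (fun u => k u * k (u⁻¹ * (z * x * z⁻¹))) z]
          refine integral_congr_ae (Filter.Eventually.of_forall fun y => ?_)
          congr 2
          group
        rw [e1, e2, hh₀_def]
      have hmemz2 : MemLp (fun x => ∫ y, Hz y * Kz (y⁻¹ * x) ∂μ) 2 μ := by
        rw [claim2]
        refine aux_memLp' (hh₀_cont.comp ?_)
        fun_prop
      refine ⟨hmemz2.toLp _, hleft Hz Kz hKzS hmemz2, ?_⟩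
      refine (MemLp.coeFn_toLp hmemz2).trans ?_
      rw [claim2]
    -- the Bochner integral of conjugates, as a continuous function
    let H0 : C(G × G, ℂ) := ⟨fun p => h₀ (p.1 * p.2 * p.1⁻¹), by fun_prop⟩
    let Φ : C(G, C(G, ℂ)) := ContinuousMap.curry H0
    have hΦ_apply : ∀ z x : G, Φ z x = h₀ (z * x * z⁻¹) := fun z x => rfl
    have hΦ_cont : Continuous (⇑Φ) := Φ.continuous
    have hΦ_int : Integrable (⇑Φ) μ := by
      borelize C(G, ℂ)
      refine ⟨(stronglyMeasurable_iff_measurable_separable.mpr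
        ⟨hΦ_cont.measurable, ?_⟩).aestronglyMeasurable, ?_⟩
      · exact (isCompact_range hΦ_cont).isSeparable
      · refine HasFiniteIntegral.of_bounded (C := ‖Φ‖) ?_
        exact Filter.Eventually.of_forall fun z => Φ.norm_coe_le_norm z
    set I : C(G, ℂ) := ∫ z, Φ z ∂μ with hI_def
    have hIx : ∀ x : G, I x = ∫ z, h₀ (z * x * z⁻¹) ∂μ := by
      intro x
      have := (ContinuousMap.evalCLM ℂ x).integral_comp_comm hΦ_int
      rw [hI_def]
      calc (∫ z, Φ z ∂μ) x = (ContinuousMap.evalCLM ℂ x) (∫ z, Φ z ∂μ) := rfl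
        _ = ∫ z, (ContinuousMap.evalCLM ℂ x) (Φ z) ∂μ := this.symm
        _ = ∫ z, h₀ (z * x * z⁻¹) ∂μ := rfl
    -- the central element
    let TL : C(G, ℂ) →L[ℂ] Lp ℂ 2 μ := ContinuousMap.toLp 2 μ ℂ
    set c : Lp ℂ 2 μ := TL I with hc_def
    have hc_coe : ⇑c =ᵐ[μ] ⇑I := ContinuousMap.coeFn_toLp μ I
    have hc_int : c = ∫ z, TL (Φ z) ∂μ := (TL.integral_comp_comm hΦ_int).symm
    have hTLΦ_mem : ∀ z : G, TL (Φ z) ∈ S := by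
      intro z
      obtain ⟨C, hCS, hC⟩ := hCz z
      have : TL (Φ z) = C := by
        apply Lp.ext ((ContinuousMap.coeFn_toLp μ (Φ z)).trans hC.symm)
      rw [this]; exact hCS
    have hcS : c ∈ S := by
      rw [hc_int]
      have hconv : Convex ℝ (S : Set (Lp ℂ 2 μ)) := (S.restrictScalars ℝ).convex
      exact hconv.integral_mem hS (Filter.Eventually.of_forall hTLΦ_mem)
        (TL.integrable_comp hΦ_int)
    -- nonvanishing
    have hKne : K ≠ 0 := by
      intro h
      have : k =ᵐ[μ] 0 := (hKk.symm.trans (h ▸ Lp.coeFn_zero ℂ 2 μ : ⇑K =ᵐ[μ] 0))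
      have : k = 0 := (hk_cont.ae_eq_iff_eq μ continuous_const).mp this
      exact hk1_ne (by rw [this]; rfl)
    have hh₀1 : h₀ 1 = ((‖K‖ : ℝ) : ℂ) ^ 2 := by
      have e1 : h₀ 1 = ∫ y, (starRingEnd ℂ) (k y) * k y ∂μ := by
        rw [hh₀_def]
        refine integral_congr_ae (Filter.Eventually.of_forall fun y => ?_)
        simp only [mul_one]
        rw [hkinv y]
        exact mul_comm _ _
      have e2 : ∫ y, (starRingEnd ℂ) (k y) * k y ∂μ = (inner ℂ K K : ℂ) := by
        rw [L2.inner_def]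
        refine integral_congr_ae ?_
        filter_upwards [hKk] with y hy
        simp only [RCLike.inner_apply]
        rw [hy]
        exact mul_comm _ _
      rw [e1, e2, inner_self_eq_norm_sq_to_K]
      norm_cast
    have hh₀1_ne : h₀ 1 ≠ 0 := by
      rw [hh₀1]
      have : ‖K‖ ≠ 0 := fun h => hKne (norm_eq_zero.mp h)
      exact pow_ne_zero 2 (Complex.ofReal_ne_zero.mpr this)
    have hI1 : I 1 = h₀ 1 := by
      rw [hIx 1]
      simp
    have hc0 : c ≠ 0 := by
      intro h
      have h1 : ⇑I =ᵐ[μ] (fun _ => 0 : G → ℂ) :=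
        (hc_coe.symm.trans (h ▸ Lp.coeFn_zero ℂ 2 μ : ⇑c =ᵐ[μ] 0))
      have h2 : ⇑I = fun _ => (0 : ℂ) :=
        ((map_continuous I).ae_eq_iff_eq μ continuous_const).mp h1
      have := hI1
      rw [show I (1 : G) = (0 : ℂ) from by rw [h2]] at this
      exact hh₀1_ne this.symm
    -- centrality
    refine ⟨c, hcS, hc0, ?_⟩
    intro g
    refine Filter.Eventually.of_forall fun x => ?_
    -- the class-function property of I
    have classI : ∀ a b : G, I (a * b) = I (b * a) := by
      intro a b
      have e : ∀ z : G, z * b * (a * b) * (z * b)⁻¹ = z * (b * a) * z⁻¹ := by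
        intro z; group
      calc I (a * b) = ∫ z, h₀ (z * (a * b) * z⁻¹) ∂μ := hIx _
        _ = ∫ z, h₀ (z * b * (a * b) * (z * b)⁻¹) ∂μ :=
            (MeasureTheory.integral_mul_right_eq_self (fun z => h₀ (z * (a * b) * z⁻¹)) b).symm
        _ = ∫ z, h₀ (z * (b * a) * z⁻¹) ∂μ := by
            refine integral_congr_ae (Filter.Eventually.of_forall fun z => ?_)
            exact congrArg h₀ (e z)
        _ = I (b * a) := (hIx _).symm
    have lhs : ∫ y, g y * c (y⁻¹ * x) ∂μ = ∫ y, g y * I (y⁻¹ * x) ∂μ := by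
      refine integral_congr_ae ?_
      filter_upwards [haeq _ (mpr x) hc_coe] with y hy
      rw [hy]
    have rhs : ∫ y, c y * g (y⁻¹ * x) ∂μ = ∫ y, I y * g (y⁻¹ * x) ∂μ := by
      refine integral_congr_ae ?_
      filter_upwards [hc_coe] with y hy
      rw [hy]
    rw [lhs, rhs]
    have estep : ∀ y : G, (x * y)⁻¹ * x = y⁻¹ := by intro y; group
    calc ∫ y, g y * I (y⁻¹ * x) ∂μ
        = ∫ y, g y * I (x * y⁻¹) ∂μ := by
          refine integral_congr_ae (Filter.Eventually.of_forall fun y => ?_)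
          exact congrArg (fun w => (g : G → ℂ) y * w) (classI y⁻¹ x)
      _ = ∫ y, g y⁻¹ * I (x * y⁻¹⁻¹) ∂μ :=
          (MeasureTheory.integral_inv_eq_self (fun y => g y * I (x * y⁻¹)) μ).symm
      _ = ∫ y, I (x * y) * g y⁻¹ ∂μ := by
          refine integral_congr_ae (Filter.Eventually.of_forall fun y => ?_)
          show (g : G → ℂ) y⁻¹ * I (x * y⁻¹⁻¹) = I (x * y) * g y⁻¹
          rw [inv_inv]
          exact mul_comm _ _
      _ = ∫ y, I y * g (y⁻¹ * x) ∂μ := by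
          refine (MeasureTheory.integral_mul_left_eq_self (fun y => I y * g (y⁻¹ * x)) x).symm.trans ?_ |>.symm
          refine integral_congr_ae (Filter.Eventually.of_forall fun y => ?_)
          show I (x * y) * (g : G → ℂ) ((x * y)⁻¹ * x) = I (x * y) * g y⁻¹
          rw [estep y]
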